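/- Candidate near-anonymity: let v be an anonymous voting rule on m ≥ 3 candidates that is pairwise responsive, pairwise isolated, and satisfies ε-strong unanimity, and define v'(x,j) = v(x, P⃗^{x,j}) where P⃗^{x,j} is a fixed canonical profile in which exactly the first j voters rank x on top (and the others rank x on the bottom), with the remaining candidates in a fixed order a_1,...,a_m. Then for every pair of candidates x, y and every j ∈ {0,...,n}, |v'(x,j) − v'(y,j)| ≤ 14mε. -/

import Mathlib

open Finset

variable {C : Type*}

/-- A preference ordering on `C`: a ranking of the candidates, where a higher
rank means more preferred. -/
abbrev Pref (C : Type*) [Fintype C] := C ≃ Fin (Fintype.card C)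

/-- `x` is strictly preferred to `y` in `P`. -/
def PrefOver [Fintype C] (P : Pref C) (x y : C) : Prop := P y < P x

/-- The top (most preferred) candidate of `P`. -/
def topC [Fintype C] [Nonempty C] (P : Pref C) : C :=
  P.symm ⟨Fintype.card C - 1, Nat.sub_lt Fintype.card_pos Nat.one_pos⟩

/-- `x` is directly above `y` in `P`. -/
def DirAbove [Fintype C] (P : Pref C) (x y : C) : Prop := (P x : ℕ) = (P y : ℕ) + 1

/-- The ordering `P` with candidates `x` and `y` swapped. -/
def swapIn [Fintype C] [DecidableEq C] (P : Pref C) (x y : C) : Pref C :=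
  (Equiv.swap x y).trans P

/-- A (randomized) voting rule: nonnegative selection probabilities summing to 1. -/
def IsVotingRule [Fintype C] {n : ℕ} (v : (Fin n → Pref C) → C → ℝ) : Prop :=
  (∀ Pvec x, 0 ≤ v Pvec x) ∧ (∀ Pvec, ∑ x, v Pvec x = 1)

def Anonymous [Fintype C] {n : ℕ} (v : (Fin n → Pref C) → C → ℝ) : Prop :=
  ∀ (σ : Equiv.Perm (Fin n)) (Pvec : Fin n → Pref C) (x : C), v (Pvec ∘ σ) x = v Pvec x

/-- Expected utility of a distribution `d` over candidates under utility `u`. -/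
def EU [Fintype C] (u : C → ℝ) (d : C → ℝ) : ℝ := ∑ x, u x * d x

/-- A `[0,1]`-valued utility function consistent with the ordering `P`. -/
def Consistent [Fintype C] (u : C → ℝ) (P : Pref C) : Prop :=
  (∀ x, u x ∈ Set.Icc (0 : ℝ) 1) ∧ ∀ x y, u x > u y ↔ PrefOver P x y

/-- The random dictatorship voting rule. -/
noncomputable def vdict [Fintype C] [Nonempty C] [DecidableEq C] {n : ℕ}
    (Pvec : Fin n → Pref C) (x : C) : ℝ :=
  ((Finset.univ.filter (fun i => topC (Pvec i) = x)).card : ℝ) / n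

def StrategyProofRule [Fintype C] {n : ℕ} (v : (Fin n → Pref C) → C → ℝ) : Prop :=
  ∀ (i : Fin n) (Pvec : Fin n → Pref C) (P' : Pref C) (u : C → ℝ),
    Consistent u (Pvec i) → EU u (v (Function.update Pvec i P')) ≤ EU u (v Pvec)

def IsBelief [Fintype C] [DecidableEq C] (φ : Pref C → ℝ) : Prop :=
  (∀ P, 0 ≤ φ P) ∧ ∑ P, φ P = 1

/-- The profile where voter `i` submits `Pi` and the other voters submit `Q`. -/
def profileWith [Fintype C] {n : ℕ} (i : Fin n) (Q : {j : Fin n // j ≠ i} → Pref C)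
    (Pi : Pref C) : Fin n → Pref C :=
  fun j => if h : j = i then Pi else Q ⟨j, h⟩

/-- Expected utility for voter `i` reporting `Pi` when the others' orderings are
i.i.d. with distribution `φ`. -/
noncomputable def beliefEU [Fintype C] [DecidableEq C] {n : ℕ}
    (v : (Fin n → Pref C) → C → ℝ) (i : Fin n) (φ : Pref C → ℝ) (u : C → ℝ)
    (Pi : Pref C) : ℝ :=
  ∑ Q : {j : Fin n // j ≠ i} → Pref C, (∏ j, φ (Q j)) * EU u (v (profileWith i Q Pi))

/-- Strategy-proofness with respect to a single i.i.d. belief `φ`. -/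
def SPwrtBelief [Fintype C] [DecidableEq C] {n : ℕ}
    (v : (Fin n → Pref C) → C → ℝ) (φ : Pref C → ℝ) : Prop :=
  ∀ (i : Fin n) (Pi Pi' : Pref C) (u : C → ℝ),
    Consistent u Pi → beliefEU v i φ u Pi' ≤ beliefEU v i φ u Pi

/-- Weak strategy-proofness: strategy-proofness w.r.t. all i.i.d. beliefs. -/
def WeaklySP [Fintype C] [DecidableEq C] {n : ℕ}
    (v : (Fin n → Pref C) → C → ℝ) : Prop :=
  ∀ φ : Pref C → ℝ, IsBelief φ → SPwrtBelief v φ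

def ParetoEff [Fintype C] {n : ℕ} (ε : ℝ) (v : (Fin n → Pref C) → C → ℝ) : Prop :=
  ∀ (x y : C) (Pvec : Fin n → Pref C), (∀ i, PrefOver (Pvec i) x y) → v Pvec y ≤ ε

def StrongUnanimity [Fintype C] [Nonempty C] {n : ℕ} (ε : ℝ)
    (v : (Fin n → Pref C) → C → ℝ) : Prop :=
  ∀ (x : C) (Pvec : Fin n → Pref C), (∀ i, topC (Pvec i) = x) → 1 - ε ≤ v Pvec x

def WeakUnanimity [Fintype C] [Nonempty C] {n : ℕ} (ε : ℝ)
    (v : (Fin n → Pref C) → C → ℝ) : Prop :=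
  ∀ P : Pref C, 1 - ε ≤ v (fun _ => P) (topC P)

def SuperWeakUnanimity [Fintype C] [Nonempty C] {n : ℕ} (ε : ℝ)
    (v : (Fin n → Pref C) → C → ℝ) : Prop :=
  ∀ x : C, ∃ Pvec : Fin n → Pref C, (∀ i, topC (Pvec i) = x) ∧ 1 - ε ≤ v Pvec x

def PairwiseResponsive [Fintype C] [DecidableEq C] {n : ℕ}
    (v : (Fin n → Pref C) → C → ℝ) : Prop :=
  ∀ (Pvec : Fin n → Pref C) (i : Fin n) (x y z : C),
    DirAbove (Pvec i) x y → z ≠ x → z ≠ y →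
      v (Function.update Pvec i (swapIn (Pvec i) x y)) z = v Pvec z

def PairwiseIsolated [Fintype C] [DecidableEq C] {n : ℕ}
    (v : (Fin n → Pref C) → C → ℝ) : Prop :=
  ∀ (i : Fin n) (Pvec Pvec' : Fin n → Pref C) (x y : C),
    DirAbove (Pvec i) x y → Pvec' i = Pvec i →
    (∀ j, j ≠ i → (PrefOver (Pvec j) x y ↔ PrefOver (Pvec' j) x y)) →
    v (Function.update Pvec' i (swapIn (Pvec' i) x y)) y - v Pvec' y =
      v (Function.update Pvec i (swapIn (Pvec i) x y)) y - v Pvec y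

/-- The ordering `e` with candidate `x` moved to the top (relative order of the
other candidates preserved). -/
def moveToTop [Fintype C] [DecidableEq C] (e : Pref C) (x : C) : Pref C :=
  e.trans ((Fin.revPerm.trans (Fin.cycleRange (e x).rev)).trans Fin.revPerm)

/-- The ordering `e` with candidate `x` moved to the bottom (relative order of
the other candidates preserved). -/
def moveToBot [Fintype C] [DecidableEq C] (e : Pref C) (x : C) : Pref C :=
  e.trans (Fin.cycleRange (e x))

/-- The canonical profile `P⃗^{x,j}`: the first `j` voters rank `x` on top and
the remaining voters rank `x` on the bottom, with the other candidates ordered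
according to the fixed ordering `e`. -/
def canonProfile [Fintype C] [DecidableEq C] {n : ℕ} (e : Pref C) (x : C) (j : ℕ) :
    Fin n → Pref C :=
  fun i => if (i : ℕ) < j then moveToTop e x else moveToBot e x

/-- `v'(x,j)`: the selection probability of `x` on the canonical profile with
exactly `j` voters ranking `x` first. -/
def vTopCount [Fintype C] [DecidableEq C] {n : ℕ} (v : (Fin n → Pref C) → C → ℝ)
    (e : Pref C) (x : C) (j : ℕ) : ℝ :=
  v (canonProfile e x j) x


/-! ### Auxiliary lemmas for the proof -/

section NearAnonAux

set_option linter.unusedSectionVars false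

variable [Fintype C] [DecidableEq C]

lemma pref_iff' (P : Pref C) (a b : C) : PrefOver P a b ↔ (P b : ℕ) < (P a : ℕ) := Iff.rfl

lemma rank_inj' (P : Pref C) {a b : C} (h : (P a : ℕ) = (P b : ℕ)) : a = b :=
  P.injective (Fin.ext h)

lemma rank_ne_of_ne (P : Pref C) {a b : C} (h : a ≠ b) : (P a : ℕ) ≠ (P b : ℕ) :=
  fun hh => h (rank_inj' P hh)

lemma swapIn_left' (P : Pref C) (a b : C) : swapIn P a b a = P b := by simp [swapIn]
lemma swapIn_right' (P : Pref C) (a b : C) : swapIn P a b b = P a := by simp [swapIn]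
lemma swapIn_other' (P : Pref C) {a b c : C} (h1 : c ≠ a) (h2 : c ≠ b) :
    swapIn P a b c = P c := by
  simp [swapIn, Equiv.swap_apply_of_ne_of_ne h1 h2]
lemma swapIn_swapIn' (P : Pref C) (a b : C) : swapIn (swapIn P a b) b a = P := by
  ext c; simp [swapIn, Equiv.swap_comm a b]
lemma swapIn_comm' (P : Pref C) (a b : C) : swapIn P a b = swapIn P b a := by
  ext c; simp [swapIn, Equiv.swap_comm a b]

lemma swapIn_val' (P : Pref C) (a b c : C) :
    ((swapIn P a b) c : ℕ) =
      if c = a then (P b : ℕ) else if c = b then (P a : ℕ) else (P c : ℕ) := by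
  split_ifs with h1 h2
  · subst h1; rw [swapIn_left']
  · subst h2; rw [swapIn_right']
  · rw [swapIn_other' P h1 h2]

lemma cycleRange_val' {N : ℕ} (i j : Fin N) :
    ((Fin.cycleRange i j : Fin N) : ℕ) =
      if (j:ℕ) < (i:ℕ) then (j:ℕ)+1 else if (j:ℕ) = (i:ℕ) then 0 else (j:ℕ) := by
  cases N with
  | zero => exact j.elim0
  | succ N =>
    rcases lt_trichotomy j i with h | h | h
    · rw [if_pos (by exact_mod_cast h), Fin.coe_cycleRange_of_lt h]
    · subst h
      rw [if_neg (lt_irrefl _), if_pos rfl, Fin.cycleRange_self]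
      rfl
    · have hlt := Fin.lt_def.mp h
      rw [if_neg (by omega), Fin.cycleRange_of_gt h, if_neg (by omega)]

lemma moveToBot_self' (P : Pref C) (x : C) : ((moveToBot P x) x : ℕ) = 0 := by
  simp [moveToBot, cycleRange_val']

lemma moveToBot_ne' (P : Pref C) {x c : C} (h : c ≠ x) :
    ((moveToBot P x) c : ℕ) = if (P c : ℕ) < (P x : ℕ) then (P c : ℕ) + 1 else (P c : ℕ) := by
  have hne : (P c : ℕ) ≠ (P x : ℕ) := rank_ne_of_ne P h
  simp only [moveToBot, Equiv.trans_apply, cycleRange_val']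
  split_ifs <;> omega

lemma moveToTop_self' (P : Pref C) (x : C) :
    ((moveToTop P x) x : ℕ) = Fintype.card C - 1 := by
  simp [moveToTop, cycleRange_val', Fin.val_rev]

lemma moveToTop_ne' (P : Pref C) {x c : C} (h : c ≠ x) :
    ((moveToTop P x) c : ℕ) = if (P x : ℕ) < (P c : ℕ) then (P c : ℕ) - 1 else (P c : ℕ) := by
  have hne : (P c : ℕ) ≠ (P x : ℕ) := rank_ne_of_ne P h
  have hc := (P c).isLt
  have hx := (P x).isLt
  simp only [moveToTop, Equiv.trans_apply, Fin.revPerm_apply, cycleRange_val', Fin.val_rev]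
  split_ifs <;> omega

lemma top_iff' {P : Pref C} {x : C} (h : (P x : ℕ) = Fintype.card C - 1) (c : C) :
    PrefOver P c x ↔ False := by
  rw [pref_iff', h]
  have := (P c).isLt
  simp only [iff_false, not_lt]
  omega

lemma bot_iff' {P : Pref C} {x : C} (h : (P x : ℕ) = 0) (c : C) :
    PrefOver P c x ↔ c ≠ x := by
  rw [pref_iff', h]
  constructor
  · intro h1 h2; subst h2; omega
  · intro h1
    have := rank_ne_of_ne P h1
    omega

lemma second_iff' {P : Pref C} {x y : C} (hx : (P x : ℕ) = Fintype.card C - 2)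
    (hy : (P y : ℕ) = Fintype.card C - 1) (hm : 2 ≤ Fintype.card C) (c : C) :
    PrefOver P c x ↔ c = y := by
  rw [pref_iff', hx]
  constructor
  · intro h1
    have hc := (P c).isLt
    have : (P c : ℕ) = (P y : ℕ) := by omega
    exact rank_inj' P this
  · intro h1; subst h1; omega

lemma secondbot_iff' {P : Pref C} {x y : C} (hx : (P x : ℕ) = 1) (hy : (P y : ℕ) = 0) (c : C) :
    PrefOver P c x ↔ c ≠ x ∧ c ≠ y := by
  rw [pref_iff', hx]
  constructor
  · intro h1
    constructor
    · intro h2; subst h2; omega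
    · intro h2; subst h2; omega
  · rintro ⟨h1, h2⟩
    have n1 := rank_ne_of_ne P h1
    have n2 := rank_ne_of_ne P h2
    omega

variable [Nonempty C]

lemma topC_of_rank' {P : Pref C} {c : C} (h : (P c : ℕ) = Fintype.card C - 1) : topC P = c := by
  have : P c = ⟨Fintype.card C - 1, Nat.sub_lt Fintype.card_pos Nat.one_pos⟩ := Fin.ext h
  rw [topC, ← this, Equiv.symm_apply_apply]

variable {n : ℕ} {v : (Fin n → Pref C) → C → ℝ} {ε : ℝ}

lemma v_le_one' (hv : IsVotingRule v) (P : Fin n → Pref C) (c : C) : v P c ≤ 1 := by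
  rw [← hv.2 P]
  exact Finset.single_le_sum (fun i _ => hv.1 P i) (mem_univ c)

lemma v_two_le' (hv : IsVotingRule v) (P : Fin n → Pref C) {c s : C} (h : c ≠ s) :
    v P c + v P s ≤ 1 := by
  have h1 : v P s + ∑ z ∈ univ.erase s, v P z = ∑ z, v P z :=
    Finset.add_sum_erase _ _ (mem_univ s)
  have h2 : v P c ≤ ∑ z ∈ univ.erase s, v P z :=
    Finset.single_le_sum (fun i _ => hv.1 P i) (mem_erase.mpr ⟨h, mem_univ c⟩)
  have := hv.2 P
  linarith

lemma v_le_eps' (hv : IsVotingRule v) (hsu : StrongUnanimity ε v) {s : C}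
    {P : Fin n → Pref C} (htops : ∀ i, topC (P i) = s) {c : C} (hc : c ≠ s) :
    v P c ≤ ε := by
  have h1 := hsu s P htops
  have h2 := v_two_le' hv P hc
  linarith

lemma eps_nonneg' (hv : IsVotingRule v) (hsu : StrongUnanimity ε v) (e : Pref C) : 0 ≤ ε := by
  have h1 := hsu (topC e) (fun _ => e) (fun _ => rfl)
  have h2 := v_le_one' hv (fun _ => e) (topC e)
  linarith

lemma step_lemma' (hpi : PairwiseIsolated v)
    (P Q : Fin n → Pref C) (i : Fin n) (z w : C)
    (hd : DirAbove (P i) z w) (hiq : P i = Q i)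
    (hcomp : ∀ k, k ≠ i → (PrefOver (P k) w z ↔ PrefOver (Q k) w z)) :
    v (Function.update P i (swapIn (P i) z w)) z - v P z
      = v (Function.update Q i (swapIn (Q i) z w)) z - v Q z := by
  set P' := Function.update P i (swapIn (P i) z w) with hP'
  set Q' := Function.update Q i (swapIn (Q i) z w) with hQ'
  have hPi' : P' i = swapIn (P i) z w := Function.update_self _ _ _
  have hQi' : Q' i = swapIn (Q i) z w := Function.update_self _ _ _
  have hd' : DirAbove (P' i) w z := by
    rw [hPi']
    unfold DirAbove at hd ⊢
    rw [swapIn_left', swapIn_right']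
    omega
  have hiq' : Q' i = P' i := by rw [hPi', hQi', hiq]
  have hcomp' : ∀ k, k ≠ i → (PrefOver (P' k) w z ↔ PrefOver (Q' k) w z) := by
    intro k hk
    rw [hP', hQ', Function.update_of_ne hk, Function.update_of_ne hk]
    exact hcomp k hk
  have key := hpi i P' Q' w z hd' hiq' hcomp'
  have hback : Function.update P' i (swapIn (P' i) w z) = P := by
    rw [hPi']
    funext k
    by_cases hk : k = i
    · subst hk; rw [Function.update_self, swapIn_swapIn']
    · rw [Function.update_of_ne hk, hP', Function.update_of_ne hk]
  have hbackQ : Function.update Q' i (swapIn (Q' i) w z) = Q := by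
    rw [hQi']
    funext k
    by_cases hk : k = i
    · subst hk; rw [Function.update_self, swapIn_swapIn']
    · rw [Function.update_of_ne hk, hQ', Function.update_of_ne hk]
  rw [hback, hbackQ] at key
  linarith

lemma sum_two' (hv : IsVotingRule v) (hpr : PairwiseResponsive v)
    (P : Fin n → Pref C) (i : Fin n) (a b : C) (hd : DirAbove (P i) a b) :
    v (Function.update P i (swapIn (P i) a b)) a + v (Function.update P i (swapIn (P i) a b)) b
      = v P a + v P b := by
  have hab : a ≠ b := by
    intro h; subst h; unfold DirAbove at hd; omega
  set P' := Function.update P i (swapIn (P i) a b)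
  have h1 : ∀ z ∈ (univ.erase a).erase b, v P' z = v P z := by
    intro z hz
    rw [mem_erase, mem_erase] at hz
    exact hpr P i a b z hd hz.2.1 hz.1
  have ha : v P' a + ∑ z ∈ univ.erase a, v P' z = ∑ z, v P' z :=
    Finset.add_sum_erase _ _ (mem_univ a)
  have hb : v P' b + ∑ z ∈ (univ.erase a).erase b, v P' z = ∑ z ∈ univ.erase a, v P' z :=
    Finset.add_sum_erase _ _ (mem_erase.mpr ⟨hab.symm, mem_univ b⟩)
  have ha' : v P a + ∑ z ∈ univ.erase a, v P z = ∑ z, v P z :=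
    Finset.add_sum_erase _ _ (mem_univ a)
  have hb' : v P b + ∑ z ∈ (univ.erase a).erase b, v P z = ∑ z ∈ univ.erase a, v P z :=
    Finset.add_sum_erase _ _ (mem_erase.mpr ⟨hab.symm, mem_univ b⟩)
  have heq : ∑ z ∈ (univ.erase a).erase b, v P' z = ∑ z ∈ (univ.erase a).erase b, v P z :=
    Finset.sum_congr rfl h1
  have hs1 := hv.2 P
  have hs2 := hv.2 P'
  linarith

end NearAnonAux


section NearAnonFree

set_option linter.unusedSectionVars false

variable [Fintype C] [DecidableEq C]

lemma strictMono_id'' (N : ℕ) (f : Fin N → Fin N) (hf : StrictMono f) : f = id := by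
  have h2 : Function.Surjective f := Finite.surjective_of_injective hf.injective
  have h3 : hf.orderIsoOfSurjective f h2 = OrderIso.refl (Fin N) := Subsingleton.elim _ _
  funext i
  have : (hf.orderIsoOfSurjective f h2) i = f i := rfl
  rw [h3] at this
  exact this.symm

lemma eq_of_no_adj_inv' (P Q : Pref C)
    (h : ∀ a b : C, DirAbove P a b → (Q b : ℕ) < (Q a : ℕ)) : P = Q := by
  set f : Fin (Fintype.card C) → Fin (Fintype.card C) := fun r => Q (P.symm r) with hf
  have hmono : StrictMono f := by
    have key : ∀ (r : Fin (Fintype.card C)) (hr : (r : ℕ) + 1 < Fintype.card C),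
        (f r : ℕ) < (f ⟨(r:ℕ)+1, hr⟩ : ℕ) := by
      intro r hr
      apply h (P.symm ⟨(r:ℕ)+1, hr⟩) (P.symm r)
      unfold DirAbove
      rw [Equiv.apply_symm_apply, Equiv.apply_symm_apply]
    intro a b hab
    have hab' : (a : ℕ) < (b : ℕ) := hab
    have hb := b.isLt
    have main : ∀ k : ℕ, ∀ (hk : (a:ℕ) + k + 1 < Fintype.card C),
        (f a : ℕ) < (f ⟨(a:ℕ)+k+1, hk⟩ : ℕ) := by
      intro k
      induction k with
      | zero => intro hk; exact key a (by omega)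
      | succ k ih =>
        intro hk
        have h1 := ih (by omega)
        have h2 := key ⟨(a:ℕ)+k+1, by omega⟩ (by exact hk)
        simp only at h2
        calc (f a : ℕ) < _ := h1
          _ < _ := h2
    have hres := main ((b:ℕ) - (a:ℕ) - 1) (by omega)
    have hbeq : b = ⟨(a:ℕ) + ((b:ℕ)-(a:ℕ)-1) + 1, by omega⟩ :=
      Fin.ext (show (b:ℕ) = (a:ℕ) + ((b:ℕ)-(a:ℕ)-1) + 1 by omega)
    rw [hbeq]
    exact hres
  have hid := strictMono_id'' _ f hmono
  ext c
  have hc := congrFun hid (P c)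
  simp only [hf, Equiv.symm_apply_apply, id_eq] at hc
  exact (congrArg Fin.val hc.symm)

noncomputable def invCount (P Q : Pref C) : ℕ :=
  ((univ : Finset (C × C)).filter
    (fun p => (P p.1 : ℕ) < (P p.2 : ℕ) ∧ (Q p.2 : ℕ) < (Q p.1 : ℕ))).card

lemma inv_decrease' (P Q : Pref C) (a b : C) (hab : DirAbove P a b)
    (hQ : (Q a : ℕ) < (Q b : ℕ)) :
    invCount (swapIn P a b) Q < invCount P Q := by
  have hab' : (P a : ℕ) = (P b : ℕ) + 1 := hab
  have hane : a ≠ b := fun h => by rw [h] at hab'; omega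
  have hmem : (b, a) ∈ (univ : Finset (C × C)).filter
      (fun p => (P p.1 : ℕ) < (P p.2 : ℕ) ∧ (Q p.2 : ℕ) < (Q p.1 : ℕ)) := by
    simp only [mem_filter, mem_univ, true_and]
    exact ⟨by omega, hQ⟩
  have hsub : (univ : Finset (C × C)).filter
      (fun p => ((swapIn P a b) p.1 : ℕ) < ((swapIn P a b) p.2 : ℕ) ∧
        (Q p.2 : ℕ) < (Q p.1 : ℕ))
      ⊆ ((univ : Finset (C × C)).filter
      (fun p => (P p.1 : ℕ) < (P p.2 : ℕ) ∧ (Q p.2 : ℕ) < (Q p.1 : ℕ))).erase (b, a) := by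
    rintro ⟨c, d⟩ hp
    simp only [mem_filter, mem_univ, true_and] at hp
    obtain ⟨hp1, hp2⟩ := hp
    rw [swapIn_val', swapIn_val'] at hp1
    rw [mem_erase]
    simp only [mem_filter, mem_univ, true_and]
    have hcd : c ≠ d := by
      intro h; subst h; split_ifs at hp1 <;> omega
    have hrne : ∀ u w : C, u ≠ w → (P u : ℕ) ≠ (P w : ℕ) := fun u w h => rank_ne_of_ne P h
    refine ⟨?_, ?_, hp2⟩
    · intro h
      rw [Prod.mk.injEq] at h
      obtain ⟨h1, h2⟩ := h
      subst h1; subst h2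
      rw [if_neg hane.symm, if_pos rfl, if_pos rfl] at hp1
      omega
    · by_cases hca : c = a
      · rw [if_pos hca] at hp1
        by_cases hdb : d = b
        · exfalso
          rw [hca, hdb] at hp2
          omega
        · have hda : d ≠ a := fun h => hcd (hca.trans h.symm)
          rw [if_neg hda, if_neg hdb] at hp1
          have h1 := hrne d a hda
          rw [hca]
          omega
      · by_cases hcb : c = b
        · rw [if_neg hca, if_pos hcb] at hp1
          by_cases hda : d = a
          · exfalso
            rw [if_pos hda] at hp1
            omega
          · by_cases hdb : d = b
            · exact absurd (hcb.trans hdb.symm) hcd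
            · rw [if_neg hda, if_neg hdb] at hp1
              rw [hcb]
              omega
        · rw [if_neg hca, if_neg hcb] at hp1
          by_cases hda : d = a
          · rw [if_pos hda] at hp1
            rw [hda]
            omega
          · by_cases hdb : d = b
            · rw [if_neg hda, if_pos hdb] at hp1
              have := hrne c b (hdb ▸ hcd)
              rw [hdb]
              omega
            · rw [if_neg hda, if_neg hdb] at hp1
              exact hp1
  calc invCount (swapIn P a b) Q ≤ _ := Finset.card_le_card hsub
    _ < _ := Finset.card_erase_lt_of_mem hmem

lemma exists_adj_inv' (P Q : Pref C) (hne : P ≠ Q) :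
    ∃ a b, DirAbove P a b ∧ (Q a : ℕ) < (Q b : ℕ) := by
  by_contra h
  push_neg at h
  apply hne
  apply eq_of_no_adj_inv'
  intro a b hab
  have h1 := h a b hab
  have hab' : (P a : ℕ) = (P b : ℕ) + 1 := hab
  have hane : a ≠ b := fun hh => by rw [hh] at hab'; omega
  have := rank_ne_of_ne Q hane
  omega

lemma inv_pos' (P Q : Pref C) (a b : C) (hab : DirAbove P a b)
    (hQ : (Q a : ℕ) < (Q b : ℕ)) : 0 < invCount P Q := by
  have hab' : (P a : ℕ) = (P b : ℕ) + 1 := hab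
  apply Finset.card_pos.mpr
  exact ⟨(b, a), by simp only [mem_filter, mem_univ, true_and]; exact ⟨by omega, hQ⟩⟩

variable [Nonempty C] {n : ℕ} {v : (Fin n → Pref C) → C → ℝ}

lemma free_single' (hpr : PairwiseResponsive v) (z : C) :
    ∀ (N : ℕ) (P Q : Pref C), invCount P Q ≤ N →
    (∀ c, PrefOver P c z ↔ PrefOver Q c z) →
    ∀ (Pvec : Fin n → Pref C) (i : Fin n), Pvec i = P →
    v Pvec z = v (Function.update Pvec i Q) z := by
  intro N
  induction N with
  | zero =>
    intro P Q hcount hblock Pvec i hPi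
    by_cases hPQ : P = Q
    · subst hPQ; rw [← hPi, Function.update_eq_self]
    · obtain ⟨a, b, hab, hQab⟩ := exists_adj_inv' P Q hPQ
      exact absurd hcount (by have := inv_pos' P Q a b hab hQab; omega)
  | succ N ih =>
    intro P Q hcount hblock Pvec i hPi
    by_cases hPQ : P = Q
    · subst hPQ; rw [← hPi, Function.update_eq_self]
    · obtain ⟨a, b, hab, hQab⟩ := exists_adj_inv' P Q hPQ
      have hab' : (P a : ℕ) = (P b : ℕ) + 1 := hab
      have hza : z ≠ a := by
        rintro rfl
        have hblockb := hblock b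
        rw [pref_iff', pref_iff'] at hblockb
        omega
      have hzb : z ≠ b := by
        rintro rfl
        have hblocka := hblock a
        rw [pref_iff', pref_iff'] at hblocka
        omega
      have hPza : (P z : ℕ) ≠ (P a : ℕ) := rank_ne_of_ne P hza
      have hPzb : (P z : ℕ) ≠ (P b : ℕ) := rank_ne_of_ne P hzb
      set P' := swapIn P a b with hP'def
      have h1 : v Pvec z = v (Function.update Pvec i P') z := by
        have key := hpr Pvec i a b z (by rw [hPi]; exact hab) hza hzb
        rw [hPi] at key
        exact key.symm
      have hblock' : ∀ c, PrefOver P' c z ↔ PrefOver Q c z := by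
        intro c
        rw [pref_iff']
        have hvz : ((P' z : ℕ)) = (P z : ℕ) := by
          rw [hP'def, swapIn_val', if_neg hza, if_neg hzb]
        rw [hvz]
        by_cases hca : c = a
        · subst hca
          have : ((P' c : ℕ)) = (P b : ℕ) := by rw [hP'def, swapIn_val', if_pos rfl]
          rw [this]
          have hc := hblock c
          rw [pref_iff'] at hc
          rw [← hc]
          omega
        · by_cases hcb : c = b
          · subst hcb
            have : ((P' c : ℕ)) = (P a : ℕ) := by
              rw [hP'def, swapIn_val', if_neg hca, if_pos rfl]
            rw [this]
            have hc := hblock c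
            rw [pref_iff'] at hc
            rw [← hc]
            omega
          · have : ((P' c : ℕ)) = (P c : ℕ) := by
              rw [hP'def, swapIn_val', if_neg hca, if_neg hcb]
            rw [this]
            have hc := hblock c
            rw [pref_iff'] at hc
            rw [← hc]
      have hcount' : invCount P' Q ≤ N := by
        have hdec := inv_decrease' P Q a b hab hQab
        rw [← hP'def] at hdec
        omega
      have h2 := ih P' Q hcount' hblock' (Function.update Pvec i P') i
        (Function.update_self _ _ _)
      rw [Function.update_idem] at h2
      rw [h1, h2]

lemma free_all' (hpr : PairwiseResponsive v) (z : C) (P Q : Fin n → Pref C)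
    (h : ∀ (i : Fin n) (c : C), PrefOver (P i) c z ↔ PrefOver (Q i) c z) :
    v P z = v Q z := by
  have main : ∀ k : ℕ, k ≤ n →
      v P z = v (fun i : Fin n => if (i : ℕ) < k then Q i else P i) z := by
    intro k
    induction k with
    | zero =>
      intro _
      have hz0 : (fun i : Fin n => if (i : ℕ) < 0 then Q i else P i) = P := by
        funext i; rw [if_neg (by omega)]
      rw [hz0]
    | succ k ih =>
      intro hk
      have hkn : k < n := by omega
      have h1 := ih (by omega)
      set H : Fin n → Pref C := fun i => if (i : ℕ) < k then Q i else P i with hH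
      have hHk : H ⟨k, hkn⟩ = P ⟨k, hkn⟩ := by rw [hH]; simp
      have h2 := free_single' hpr z (invCount (P ⟨k, hkn⟩) (Q ⟨k, hkn⟩)) (P ⟨k, hkn⟩)
        (Q ⟨k, hkn⟩) le_rfl (h ⟨k, hkn⟩) H ⟨k, hkn⟩ hHk
      have h3 : Function.update H ⟨k, hkn⟩ (Q ⟨k, hkn⟩)
          = fun i : Fin n => if (i : ℕ) < k + 1 then Q i else P i := by
        funext i
        by_cases hik : i = ⟨k, hkn⟩
        · subst hik
          rw [Function.update_self, if_pos (by simp)]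
        · rw [Function.update_of_ne hik]
          simp only [hH]
          have : (i : ℕ) ≠ k := fun hh => hik (Fin.ext hh)
          by_cases hlt : (i : ℕ) < k
          · rw [if_pos hlt, if_pos (by omega)]
          · rw [if_neg hlt, if_neg (by omega)]
      rw [h1, h2, h3]
  have := main n le_rfl
  rw [this]
  congr 1
  funext i
  rw [if_pos i.isLt]

lemma cons_all' (hv : IsVotingRule v) (hpr : PairwiseResponsive v) (x y : C)
    (P : Fin n → Pref C)
    (hadj : ∀ i, DirAbove (P i) x y ∨ DirAbove (P i) y x) :
    v (fun i => swapIn (P i) x y) x + v (fun i => swapIn (P i) x y) y = v P x + v P y := by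
  have main : ∀ k : ℕ, k ≤ n →
      v (fun i : Fin n => if (i : ℕ) < k then swapIn (P i) x y else P i) x
        + v (fun i : Fin n => if (i : ℕ) < k then swapIn (P i) x y else P i) y
        = v P x + v P y := by
    intro k
    induction k with
    | zero =>
      intro _
      have : (fun i : Fin n => if (i : ℕ) < 0 then swapIn (P i) x y else P i) = P := by
        funext i; rw [if_neg (by omega)]
      rw [this]
    | succ k ih =>
      intro hk
      have hkn : k < n := by omega
      have h1 := ih (by omega)
      set H : Fin n → Pref C := fun i => if (i : ℕ) < k then swapIn (P i) x y else P i with hH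
      have hHk : H ⟨k, hkn⟩ = P ⟨k, hkn⟩ := by rw [hH]; simp
      have h3 : Function.update H ⟨k, hkn⟩ (swapIn (P ⟨k, hkn⟩) x y)
          = fun i : Fin n => if (i : ℕ) < k + 1 then swapIn (P i) x y else P i := by
        funext i
        by_cases hik : i = ⟨k, hkn⟩
        · subst hik
          rw [Function.update_self, if_pos (by simp)]
        · rw [Function.update_of_ne hik]
          simp only [hH]
          have : (i : ℕ) ≠ k := fun hh => hik (Fin.ext hh)
          by_cases hlt : (i : ℕ) < k
          · rw [if_pos hlt, if_pos (by omega)]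
          · rw [if_neg hlt, if_neg (by omega)]
      rcases hadj ⟨k, hkn⟩ with hd | hd
      · have h2 := sum_two' hv hpr H ⟨k, hkn⟩ x y (by rw [hHk]; exact hd)
        rw [hHk] at h2
        rw [h3] at h2
        rw [h2, h1]
      · have h2 := sum_two' hv hpr H ⟨k, hkn⟩ y x (by rw [hHk]; exact hd)
        rw [hHk] at h2
        rw [swapIn_comm' (P ⟨k, hkn⟩) y x] at h2
        rw [h3] at h2
        linarith
  have := main n le_rfl
  have heq : (fun i : Fin n => if (i : ℕ) < n then swapIn (P i) x y else P i)
      = fun i => swapIn (P i) x y := by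
    funext i; rw [if_pos i.isLt]
  rw [heq] at this
  exact this

end NearAnonFree


section NearAnonCore

set_option linter.unusedSectionVars false

/-- Iteratively lower candidate `x` one position at a time. -/
noncomputable def lowerSeq [Fintype C] [DecidableEq C] (T : Pref C) (x : C) : ℕ → Pref C
  | 0 => T
  | (t+1) =>
      let P := lowerSeq T x t
      if h : (P x : ℕ) ≠ 0 then
        swapIn P x (P.symm ⟨(P x : ℕ) - 1, by have := (P x).isLt; omega⟩)
      else P

/-- Profile with an active voter `a`. -/
def phProf [Fintype C] [DecidableEq C] {n : ℕ} (j a : ℕ) (A T W B : Pref C) : Fin n → Pref C :=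
  fun k => if (k : ℕ) < a then A else if (k : ℕ) = a then T else if (k : ℕ) < j then W else B

/-- Three-block profile. -/
def rProf [Fintype C] [DecidableEq C] {n : ℕ} (j a : ℕ) (A W B : Pref C) : Fin n → Pref C :=
  fun k => if (k : ℕ) < a then A else if (k : ℕ) < j then W else B

variable [Fintype C] [DecidableEq C]

lemma lowerSeq_zero (T : Pref C) (x : C) : lowerSeq T x 0 = T := rfl

lemma lowerSeq_succ (T : Pref C) (x : C) (t : ℕ)
    (h : ((lowerSeq T x t) x : ℕ) ≠ 0) :
    lowerSeq T x (t+1) = swapIn (lowerSeq T x t) x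
      ((lowerSeq T x t).symm ⟨((lowerSeq T x t) x : ℕ) - 1,
        by have := ((lowerSeq T x t) x).isLt; omega⟩) := by
  rw [lowerSeq]
  simp only [h, ne_eq, not_false_eq_true, dif_pos]

variable [Nonempty C]

set_option maxHeartbeats 1000000 in
lemma core_bound {n : ℕ} (hm : 3 ≤ Fintype.card C)
    {v : (Fin n → Pref C) → C → ℝ}
    (hv : IsVotingRule v) (hpr : PairwiseResponsive v) (hpi : PairwiseIsolated v)
    {ε : ℝ} (hsu : StrongUnanimity ε v)
    (e : Pref C) (x y : C) (hxy : x ≠ y) (j : ℕ) (hj : j ≤ n) :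
    v (fun k : Fin n => if (k : ℕ) < j then moveToTop (moveToTop e x) y
        else moveToBot (moveToBot e x) y) x ≤ 3 * ε := by
  set M := Fintype.card C with hM
  set Tyx := moveToTop (moveToTop e x) y with hTyx
  set Byx := moveToBot (moveToBot e x) y with hByx
  set O : ℕ → Pref C := lowerSeq Tyx x with hO
  set A := O (M - 2) with hA
  set D := swapIn Byx x y with hD
  have hyx : y ≠ x := hxy.symm
  -- rank facts
  have hE1x : ((moveToTop e x) x : ℕ) = M - 1 := moveToTop_self' e x
  have hTyxy : (Tyx y : ℕ) = M - 1 := moveToTop_self' _ y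
  have hTyxx : (Tyx x : ℕ) = M - 2 := by
    rw [hTyx, moveToTop_ne' _ hxy]
    have h1 := rank_ne_of_ne (moveToTop e x) hyx
    have h2 := ((moveToTop e x) y).isLt
    rw [hE1x] at h1 ⊢
    rw [if_pos (by omega)]
    omega
  have hByxy : (Byx y : ℕ) = 0 := moveToBot_self' _ y
  have hByxx : (Byx x : ℕ) = 1 := by
    rw [hByx, moveToBot_ne' _ hxy]
    have h1 := rank_ne_of_ne (moveToBot e x) hyx
    have h2 := moveToBot_self' e x
    rw [h2] at h1 ⊢
    rw [if_pos (by omega)]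
  have hByxc : ∀ c, c ≠ x → c ≠ y → 2 ≤ (Byx c : ℕ) := by
    intro c hcx hcy
    have h1 := rank_ne_of_ne Byx hcx
    have h2 := rank_ne_of_ne Byx hcy
    rw [hByxx] at h1
    rw [hByxy] at h2
    omega
  have hDx : (D x : ℕ) = 0 := by rw [hD, swapIn_left', hByxy]
  have hDy : (D y : ℕ) = 1 := by rw [hD, swapIn_right', hByxx]
  have hDc : ∀ c, c ≠ x → c ≠ y → (D c : ℕ) = (Byx c : ℕ) := by
    intro c hcx hcy
    rw [hD, swapIn_other' _ hcx hcy]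
  set s := topC Byx with hs
  have hsrank : (Byx s : ℕ) = M - 1 := by
    rw [hs, topC]
    rw [Equiv.apply_symm_apply]
  have hsx : s ≠ x := by
    intro h; rw [h, hByxx] at hsrank; omega
  have hsy : s ≠ y := by
    intro h; rw [h, hByxy] at hsrank; omega
  have htopD : topC D = s := by
    apply topC_of_rank'
    rw [hDc s hsx hsy]
    exact hsrank
  have htopByx : topC Byx = s := rfl
  have htopTyx : topC Tyx = y := topC_of_rank' hTyxy
  -- invariant of the lowering sequence
  have hOinv : ∀ t, t ≤ M - 2 → ((O t) x : ℕ) = M - 2 - t ∧ ((O t) y : ℕ) = M - 1 := by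
    intro t
    induction t with
    | zero =>
      intro _
      rw [hO, lowerSeq_zero]
      exact ⟨hTyxx, hTyxy⟩
    | succ t ih =>
      intro ht
      obtain ⟨ih1, ih2⟩ := ih (by omega)
      have hne0 : ((O t) x : ℕ) ≠ 0 := by omega
      set b := (O t).symm ⟨((O t) x : ℕ) - 1,
        by have := ((O t) x).isLt; omega⟩ with hb
      have hstep : O (t+1) = swapIn (O t) x b := lowerSeq_succ Tyx x t hne0
      have hbrank : ((O t) b : ℕ) = ((O t) x : ℕ) - 1 := by
        rw [hb, Equiv.apply_symm_apply]
      have hbx : b ≠ x := by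
        intro h; rw [h] at hbrank; omega
      have hby : b ≠ y := by
        intro h; rw [h, ih2] at hbrank; omega
      constructor
      · rw [hstep, swapIn_left', hbrank]; omega
      · rw [hstep, swapIn_other' _ hyx hby.symm]
        exact ih2
  have hAx : (A x : ℕ) = 0 := by
    have := (hOinv (M-2) le_rfl).1
    rw [hA]; omega
  have hAy : (A y : ℕ) = M - 1 := (hOinv (M-2) le_rfl).2
  have htopA : topC A = y := topC_of_rank' hAy
  -- crossing data
  have hcross : ∀ t, t + 1 ≤ M - 2 → ∃ b : C,
      O (t+1) = swapIn (O t) x b ∧ DirAbove (O t) x b ∧ b ≠ x ∧ b ≠ y := by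
    intro t ht
    obtain ⟨h1, h2⟩ := hOinv t (by omega)
    have hne0 : ((O t) x : ℕ) ≠ 0 := by omega
    refine ⟨(O t).symm ⟨((O t) x : ℕ) - 1, by have := ((O t) x).isLt; omega⟩,
      lowerSeq_succ Tyx x t hne0, ?_, ?_, ?_⟩
    · unfold DirAbove
      rw [Equiv.apply_symm_apply]
      show ((O t) x : ℕ) = ((O t) x : ℕ) - 1 + 1
      omega
    · intro h
      have := congrArg (fun c => ((O t) c : ℕ)) h
      simp only [Equiv.apply_symm_apply] at this
      omega
    · intro h
      have := congrArg (fun c => ((O t) c : ℕ)) h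
      simp only [Equiv.apply_symm_apply] at this
      rw [h2] at this
      omega
  have hvx_nonneg := hv.1
  have hMn : 1 ≤ M - 1 := by omega
  -- PHASE 1
  have hinner : ∀ a, a < j → ∀ t, t ≤ M - 2 →
      v (phProf j a A Tyx Tyx Byx) x - v (phProf j a A (O t) Tyx Byx) x
        = v (phProf j a A Tyx Tyx A) x - v (phProf j a A (O t) Tyx A) x := by
    intro a ha t
    induction t with
    | zero =>
      intro _
      rw [hO, lowerSeq_zero]
      ring
    | succ t ih =>
      intro ht
      have ihr := ih (by omega)
      obtain ⟨b, hstep, hdir, hbx, hby⟩ := hcross t ht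
      have han : a < n := by omega
      set i : Fin n := ⟨a, han⟩ with hi
      have hia : (i : ℕ) = a := rfl
      have hPi : (phProf j a A (O t) Tyx Byx : Fin n → Pref C) i = O t := by
        simp only [phProf]
        simp [hia]
      have hQi : (phProf j a A (O t) Tyx A : Fin n → Pref C) i = O t := by
        simp only [phProf]
        simp [hia]
      have hByxb : PrefOver Byx b x := by
        rw [pref_iff', hByxx]
        have := hByxc b hbx hby
        omega
      have hAb : PrefOver A b x := by
        rw [pref_iff', hAx]
        have := rank_ne_of_ne A hbx
        rw [hAx] at this
        omega
      have hcomp : ∀ k, k ≠ i →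
          (PrefOver ((phProf j a A (O t) Tyx Byx : Fin n → Pref C) k) b x ↔
           PrefOver ((phProf j a A (O t) Tyx A : Fin n → Pref C) k) b x) := by
        intro k hk
        have hka : (k : ℕ) ≠ a := fun h => hk (Fin.ext h)
        simp only [phProf]
        by_cases h1 : (k : ℕ) < a
        · rw [if_pos h1, if_pos h1]
        · rw [if_neg h1, if_neg h1, if_neg hka, if_neg hka]
          by_cases h2 : (k : ℕ) < j
          · rw [if_pos h2, if_pos h2]
          · rw [if_neg h2, if_neg h2]
            exact iff_of_true hByxb hAb
      have hkey := step_lemma' hpi (phProf j a A (O t) Tyx Byx)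
        (phProf j a A (O t) Tyx A) i x b
        (by rw [hPi]; exact hdir) (by rw [hPi, hQi]) hcomp
      have hupP : Function.update (phProf j a A (O t) Tyx Byx : Fin n → Pref C) i
          (swapIn ((phProf j a A (O t) Tyx Byx : Fin n → Pref C) i) x b)
          = phProf j a A (O (t+1)) Tyx Byx := by
        rw [hPi]
        funext k
        by_cases hk : k = i
        · subst hk
          rw [Function.update_self, ← hstep]
          simp only [phProf]
          simp [hia]
        · rw [Function.update_of_ne hk]
          have hka : (k : ℕ) ≠ a := fun h => hk (Fin.ext h)
          simp only [phProf]
          rw [if_neg hka, if_neg hka]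
      have hupQ : Function.update (phProf j a A (O t) Tyx A : Fin n → Pref C) i
          (swapIn ((phProf j a A (O t) Tyx A : Fin n → Pref C) i) x b)
          = phProf j a A (O (t+1)) Tyx A := by
        rw [hQi]
        funext k
        by_cases hk : k = i
        · subst hk
          rw [Function.update_self, ← hstep]
          simp only [phProf]
          simp [hia]
        · rw [Function.update_of_ne hk]
          have hka : (k : ℕ) ≠ a := fun h => hk (Fin.ext h)
          simp only [phProf]
          rw [if_neg hka, if_neg hka]
      rw [hupP, hupQ] at hkey
      linarith
  -- phase 1 endpoints equalities
  have hRstart : ∀ a, a < j → (phProf j a A Tyx Tyx Byx : Fin n → Pref C)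
      = rProf j a A Tyx Byx := by
    intro a ha
    funext k
    simp only [phProf, rProf]
    split_ifs <;> first | (exfalso; omega) | rfl
  have hRend : ∀ a, a < j → (phProf j a A A Tyx Byx : Fin n → Pref C)
      = rProf j (a+1) A Tyx Byx := by
    intro a ha
    funext k
    simp only [phProf, rProf]
    split_ifs <;> first | (exfalso; omega) | rfl
  have hCstart : ∀ a, a < j → (phProf j a A Tyx Tyx A : Fin n → Pref C)
      = rProf j a A Tyx A := by
    intro a ha
    funext k
    simp only [phProf, rProf]
    split_ifs <;> first | (exfalso; omega) | rfl
  have hCend : ∀ a, a < j → (phProf j a A A Tyx A : Fin n → Pref C)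
      = rProf j (a+1) A Tyx A := by
    intro a ha
    funext k
    simp only [phProf, rProf]
    split_ifs <;> first | (exfalso; omega) | rfl
  have houter : ∀ a, a ≤ j →
      v (rProf j 0 A Tyx Byx : Fin n → Pref C) x - v (rProf j a A Tyx Byx : Fin n → Pref C) x
        = v (rProf j 0 A Tyx A : Fin n → Pref C) x - v (rProf j a A Tyx A : Fin n → Pref C) x := by
    intro a
    induction a with
    | zero => intro _; ring
    | succ a ih =>
      intro ha
      have haj : a < j := by omega
      have ihr := ih (by omega)
      have hstep := hinner a haj (M - 2) le_rfl
      rw [hRstart a haj, hCstart a haj, ← hA] at hstep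
      rw [hRend a haj, hCend a haj] at hstep
      linarith
  -- PHASE 2
  have hDyx : PrefOver D y x := by
    rw [pref_iff', hDx, hDy]; omega
  have hAyx : PrefOver A y x := by
    rw [pref_iff', hAx, hAy]; omega
  have hphase2 : ∀ b, j ≤ b → b ≤ n →
      v (rProf j j A Tyx Byx : Fin n → Pref C) x - v (rProf b j A D Byx : Fin n → Pref C) x
        = v (rProf j 0 A D Byx : Fin n → Pref C) x - v (rProf b 0 A D Byx : Fin n → Pref C) x := by
    have hSj : (rProf j j A Tyx Byx : Fin n → Pref C) = rProf j j A D Byx := by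
      funext k
      simp only [rProf]
      split_ifs <;> first | (exfalso; omega) | rfl
    rw [hSj]
    intro b hb
    induction b, hb using Nat.le_induction with
    | base => intro _; ring
    | succ b hb ih =>
      intro hbn
      have ihr := ih (by omega)
      have hbn' : b < n := by omega
      set i : Fin n := ⟨b, hbn'⟩ with hi
      have hib : (i : ℕ) = b := rfl
      have hPi : (rProf b j A D Byx : Fin n → Pref C) i = Byx := by
        simp only [rProf, hib]
        rw [if_neg (by omega), if_neg (by omega)]
      have hQi : (rProf b 0 A D Byx : Fin n → Pref C) i = Byx := by
        simp only [rProf, hib]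
        rw [if_neg (by omega), if_neg (by omega)]
      have hd : DirAbove Byx x y := by
        unfold DirAbove
        rw [hByxx, hByxy]
      have hcomp : ∀ k, k ≠ i →
          (PrefOver ((rProf b j A D Byx : Fin n → Pref C) k) y x ↔
           PrefOver ((rProf b 0 A D Byx : Fin n → Pref C) k) y x) := by
        intro k hk
        have hka : (k : ℕ) ≠ b := fun h => hk (Fin.ext h)
        simp only [rProf]
        rw [if_neg (by omega : ¬ ((k:ℕ) < 0))]
        by_cases h1 : (k : ℕ) < j
        · rw [if_pos h1, if_pos (by omega)]
          exact iff_of_true hAyx hDyx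
        · rw [if_neg h1]
      have hkey := step_lemma' hpi (rProf b j A D Byx) (rProf b 0 A D Byx) i x y
        (by rw [hPi]; exact hd) (by rw [hPi, hQi]) hcomp
      have hupP : Function.update (rProf b j A D Byx : Fin n → Pref C) i
          (swapIn ((rProf b j A D Byx : Fin n → Pref C) i) x y)
          = rProf (b+1) j A D Byx := by
        rw [hPi]
        funext k
        by_cases hk : k = i
        · subst hk
          rw [Function.update_self, ← hD]
          simp only [rProf, hib]
          rw [if_neg (by omega), if_pos (by omega)]
        · rw [Function.update_of_ne hk]
          have hka : (k : ℕ) ≠ b := fun h => hk (Fin.ext h)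
          simp only [rProf]
          split_ifs <;> first | (exfalso; omega) | rfl
      have hupQ : Function.update (rProf b 0 A D Byx : Fin n → Pref C) i
          (swapIn ((rProf b 0 A D Byx : Fin n → Pref C) i) x y)
          = rProf (b+1) 0 A D Byx := by
        rw [hQi]
        funext k
        by_cases hk : k = i
        · subst hk
          rw [Function.update_self, ← hD]
          simp only [rProf, hib]
          rw [if_neg (by omega : ¬ ((b:ℕ) < 0)), if_pos (by omega)]
        · rw [Function.update_of_ne hk]
          have hka : (k : ℕ) ≠ b := fun h => hk (Fin.ext h)
          simp only [rProf]
          split_ifs <;> first | (exfalso; omega) | rfl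
      rw [hupP, hupQ] at hkey
      linarith
  -- endpoint bounds
  have hCc0tops : ∀ k : Fin n, topC ((rProf j 0 A Tyx A : Fin n → Pref C) k) = y := by
    intro k
    simp only [rProf]
    rw [if_neg (show ¬ ((k:ℕ) < 0) by omega)]
    by_cases h1 : (k : ℕ) < j
    · rw [if_pos h1]; exact htopTyx
    · rw [if_neg h1]; exact htopA
  have hCcj_eq : (rProf j j A Tyx A : Fin n → Pref C) = fun _ => A := by
    funext k
    simp only [rProf]
    split_ifs <;> rfl
  have hCcjtops : ∀ k : Fin n, topC ((rProf j j A Tyx A : Fin n → Pref C) k) = y := by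
    intro k
    rw [hCcj_eq]
    exact htopA
  have hKtops : ∀ b : ℕ, ∀ k : Fin n, topC ((rProf b 0 A D Byx : Fin n → Pref C) k) = s := by
    intro b k
    simp only [rProf]
    rw [if_neg (show ¬ ((k:ℕ) < 0) by omega)]
    by_cases h1 : (k : ℕ) < b
    · rw [if_pos h1]; exact htopD
    · rw [if_neg h1]
  have hb1 : v (rProf j 0 A Tyx A : Fin n → Pref C) x ≤ ε := v_le_eps' hv hsu hCc0tops hxy
  have hb1' : 0 ≤ v (rProf j 0 A Tyx A : Fin n → Pref C) x := hv.1 _ _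
  have hb2 : v (rProf j j A Tyx A : Fin n → Pref C) x ≤ ε := v_le_eps' hv hsu hCcjtops hxy
  have hb2' : 0 ≤ v (rProf j j A Tyx A : Fin n → Pref C) x := hv.1 _ _
  have hb3 : v (rProf j 0 A D Byx : Fin n → Pref C) x ≤ ε := v_le_eps' hv hsu (hKtops j) hsx.symm
  have hb3' : 0 ≤ v (rProf j 0 A D Byx : Fin n → Pref C) x := hv.1 _ _
  have hb4 : v (rProf n 0 A D Byx : Fin n → Pref C) x ≤ ε := v_le_eps' hv hsu (hKtops n) hsx.symm
  have hb4' : 0 ≤ v (rProf n 0 A D Byx : Fin n → Pref C) x := hv.1 _ _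
  -- final profile
  have hfinal : v (rProf n j A D Byx : Fin n → Pref C) x = v (fun _ : Fin n => A) x := by
    apply free_all' hpr x
    intro k c
    simp only [rProf]
    by_cases h1 : (k : ℕ) < j
    · rw [if_pos h1]
    · rw [if_neg h1, if_pos k.isLt]
      rw [bot_iff' hDx c, bot_iff' hAx c]
  have hallA : v (fun _ : Fin n => A) x ≤ ε := v_le_eps' hv hsu (fun _ => htopA) hxy
  -- assemble
  have hgoal : (fun k : Fin n => if (k : ℕ) < j then moveToTop (moveToTop e x) y
      else moveToBot (moveToBot e x) y) = (rProf j 0 A Tyx Byx : Fin n → Pref C) := by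
    funext k
    simp only [rProf, ← hTyx, ← hByx]
    rw [if_neg (by omega : ¬ ((k:ℕ) < 0))]
  rw [hgoal]
  have h1 := houter j le_rfl
  have h2 := hphase2 n hj le_rfl
  linarith

end NearAnonCore

set_option maxHeartbeats 1000000 in
/-- Candidate near-anonymity: `|v'(x,j) − v'(y,j)| ≤ 14mε`. -/
theorem candidate_near_anonymity [Fintype C] [Nonempty C] [DecidableEq C] {n : ℕ}
    (hm : 3 ≤ Fintype.card C) (v : (Fin n → Pref C) → C → ℝ)
    (hv : IsVotingRule v) (han : Anonymous v) (hpr : PairwiseResponsive v)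
    (hpi : PairwiseIsolated v) (ε : ℝ) (hsu : StrongUnanimity ε v)
    (e : Pref C) (x y : C) (j : ℕ) (hj : j ≤ n) :
    |vTopCount v e x j - vTopCount v e y j| ≤ 14 * (Fintype.card C : ℝ) * ε := by
  have hε : 0 ≤ ε := eps_nonneg' hv hsu e
  have hM3 : (3:ℝ) ≤ 14 * (Fintype.card C : ℝ) := by
    have h1 : (3:ℝ) ≤ (Fintype.card C : ℝ) := by exact_mod_cast hm
    nlinarith
  have h14 : (0:ℝ) ≤ 14 * (Fintype.card C : ℝ) * ε :=
    mul_nonneg (by linarith) hε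
  have hkey : 3 * ε ≤ 14 * (Fintype.card C : ℝ) * ε := by
    nlinarith [mul_nonneg (show (0:ℝ) ≤ 14 * (Fintype.card C : ℝ) - 3 by linarith) hε]
  by_cases hxy : x = y
  · subst hxy
    simp only [sub_self, abs_zero]
    exact h14
  · have hyx : y ≠ x := fun h => hxy h.symm
    set M := Fintype.card C with hM
    set Txy := moveToTop (moveToTop e y) x with hTxy
    set Bxy := moveToBot (moveToBot e y) x with hBxy
    set Z : Fin n → Pref C := fun k => if (k : ℕ) < j then Txy else Bxy with hZ
    set Zs : Fin n → Pref C := fun k => swapIn (Z k) x y with hZs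
    -- rank facts
    have hTxyx : (Txy x : ℕ) = M - 1 := moveToTop_self' _ x
    have hTxyy : (Txy y : ℕ) = M - 2 := by
      rw [hTxy, moveToTop_ne' _ hyx]
      have h1 := rank_ne_of_ne (moveToTop e y) hxy
      have h2 := ((moveToTop e y) x).isLt
      have h3 : ((moveToTop e y) y : ℕ) = M - 1 := moveToTop_self' e y
      rw [h3] at h1 ⊢
      rw [if_pos (by omega)]
      omega
    have hBxyx : (Bxy x : ℕ) = 0 := moveToBot_self' _ x
    have hBxyy : (Bxy y : ℕ) = 1 := by
      rw [hBxy, moveToBot_ne' _ hyx]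
      have h1 := rank_ne_of_ne (moveToBot e y) hxy
      have h2 : ((moveToBot e y) y : ℕ) = 0 := moveToBot_self' e y
      rw [h2] at h1 ⊢
      rw [if_pos (by omega)]
    -- (1) v Z x = v'(x,j)
    have hvx : v Z x = vTopCount v e x j := by
      rw [vTopCount]
      apply free_all' hpr x
      intro k c
      simp only [hZ, canonProfile]
      by_cases h1 : (k : ℕ) < j
      · rw [if_pos h1, if_pos h1, top_iff' hTxyx c, top_iff' (moveToTop_self' e x) c]
      · rw [if_neg h1, if_neg h1, bot_iff' hBxyx c, bot_iff' (moveToBot_self' e x) c]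
    -- (2) adjacency and conservation
    have hadj : ∀ k : Fin n, DirAbove (Z k) x y ∨ DirAbove (Z k) y x := by
      intro k
      simp only [hZ]
      by_cases h1 : (k : ℕ) < j
      · left
        rw [if_pos h1]
        unfold DirAbove
        rw [hTxyx, hTxyy]
        omega
      · right
        rw [if_neg h1]
        unfold DirAbove
        rw [hBxyx, hBxyy]
    have hcons : v Zs x + v Zs y = v Z x + v Z y := cons_all' hv hpr x y Z hadj
    -- (3) v Zs y = v'(y,j)
    have hvy : v Zs y = vTopCount v e y j := by
      rw [vTopCount]
      apply free_all' hpr y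
      intro k c
      simp only [hZs, hZ, canonProfile]
      by_cases h1 : (k : ℕ) < j
      · rw [if_pos h1, if_pos h1]
        have hr : ((swapIn Txy x y) y : ℕ) = M - 1 := by rw [swapIn_right', hTxyx]
        rw [top_iff' hr c, top_iff' (moveToTop_self' e y) c]
      · rw [if_neg h1, if_neg h1]
        have hr : ((swapIn Bxy x y) y : ℕ) = 0 := by rw [swapIn_right', hBxyx]
        rw [bot_iff' hr c, bot_iff' (moveToBot_self' e y) c]
    -- (4) v Zs x = v Z' x
    have hm2 : 2 ≤ Fintype.card C := by omega
    have hTyx'y : ((moveToTop (moveToTop e x) y) y : ℕ) = M - 1 := moveToTop_self' _ y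
    have hTyx'x : ((moveToTop (moveToTop e x) y) x : ℕ) = M - 2 := by
      rw [moveToTop_ne' _ hxy]
      have h1 := rank_ne_of_ne (moveToTop e x) hyx
      have h2 := ((moveToTop e x) y).isLt
      have h3 : ((moveToTop e x) x : ℕ) = M - 1 := moveToTop_self' e x
      rw [h3] at h1 ⊢
      rw [if_pos (by omega)]
      omega
    have hByx'y : ((moveToBot (moveToBot e x) y) y : ℕ) = 0 := moveToBot_self' _ y
    have hByx'x : ((moveToBot (moveToBot e x) y) x : ℕ) = 1 := by
      rw [moveToBot_ne' _ hxy]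
      have h1 := rank_ne_of_ne (moveToBot e x) hyx
      have h2 : ((moveToBot e x) x : ℕ) = 0 := moveToBot_self' e x
      rw [h2] at h1 ⊢
      rw [if_pos (by omega)]
    have hvxZs : v Zs x = v (fun k : Fin n => if (k : ℕ) < j
        then moveToTop (moveToTop e x) y else moveToBot (moveToBot e x) y) x := by
      apply free_all' hpr x
      intro k c
      simp only [hZs, hZ]
      by_cases h1 : (k : ℕ) < j
      · rw [if_pos h1, if_pos h1]
        have ha : ((swapIn Txy x y) x : ℕ) = M - 2 := by rw [swapIn_left', hTxyy]
        have hb : ((swapIn Txy x y) y : ℕ) = M - 1 := by rw [swapIn_right', hTxyx]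
        rw [second_iff' ha hb hm2 c, second_iff' hTyx'x hTyx'y hm2 c]
      · rw [if_neg h1, if_neg h1]
        have ha : ((swapIn Bxy x y) x : ℕ) = 1 := by rw [swapIn_left', hBxyy]
        have hb : ((swapIn Bxy x y) y : ℕ) = 0 := by rw [swapIn_right', hBxyx]
        rw [secondbot_iff' ha hb c, secondbot_iff' hByx'x hByx'y c]
    -- (5),(6) core bounds
    have hcore1 : v (fun k : Fin n => if (k : ℕ) < j
        then moveToTop (moveToTop e x) y else moveToBot (moveToBot e x) y) x ≤ 3 * ε :=
      core_bound hm hv hpr hpi hsu e x y hxy j hj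
    have hcore2 : v Z y ≤ 3 * ε := by
      have := core_bound hm hv hpr hpi hsu e y x hyx j hj
      exact this
    have hn1 : 0 ≤ v Zs x := hv.1 _ _
    have hn2 : 0 ≤ v Z y := hv.1 _ _
    have hdiff : vTopCount v e x j - vTopCount v e y j = v Zs x - v Z y := by
      rw [← hvx, ← hvy]
      linarith
    rw [hdiff]
    have habs : |v Zs x - v Z y| ≤ 3 * ε := by
      rw [abs_le]
      constructor
      · rw [hvxZs] at hn1 ⊢
        linarith
      · rw [hvxZs]
        linarith
    exact le_trans habs hkey
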